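/- For the half-line graph V = {0,1,2,...} with edges k ∼ k+1, edge weights b(k,k+1) = 1, and vertex weights μ ≡ 1, the operator Δ²u + Wu with W(k) = −k is essentially self-adjoint on the finitely supported functions in ℓ²(V). -/

import Mathlib

/-- The graph Laplacian on the half-line graph `ℕ` with edges `k ∼ k+1`, unit edge
and vertex weights: `(Δu)(x) = Σ_{y∼x} (u x − u y)`. -/
def lapHalfLine (u : ℕ → ℂ) : ℕ → ℂ
  | 0 => u 0 - u 1
  | n + 1 => 2 * u (n + 1) - u n - u (n + 2)

private lemma lap_zero (u : ℕ → ℂ) : lapHalfLine u 0 = u 0 - u 1 := rfl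

private lemma lap_succ (u : ℕ → ℂ) (n : ℕ) :
    lapHalfLine u (n + 1) = 2 * u (n + 1) - u n - u (n + 2) := rfl

private lemma summable_mul_conj {a b : ℕ → ℂ}
    (ha : Summable fun n => ‖a n‖ ^ 2) (hb : Summable fun n => ‖b n‖ ^ 2) :
    Summable fun n => a n * (starRingEnd ℂ) (b n) := by
  refine Summable.of_norm (Summable.of_nonneg_of_le (fun n => norm_nonneg _) (fun n => ?_)
    ((ha.add hb).div_const 2))
  rw [norm_mul, RCLike.norm_conj]
  nlinarith [norm_nonneg (a n), norm_nonneg (b n), sq_nonneg (‖a n‖ - ‖b n‖)]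

private lemma summable_pred {f : ℕ → ℝ} (hf : Summable f) : Summable fun n => f (n - 1) := by
  rw [← summable_nat_add_iff 1]
  simpa using hf

private lemma lap_l2 {u : ℕ → ℂ} (hu : Summable fun n => ‖u n‖ ^ 2) :
    Summable fun n => ‖lapHalfLine u n‖ ^ 2 := by
  have h1 : Summable fun n => ‖u (n + 1)‖ ^ 2 := (_root_.summable_nat_add_iff (f := fun n => ‖u n‖ ^ 2) 1).mpr hu
  have hp : Summable fun n => ‖u (n - 1)‖ ^ 2 := summable_pred (f := fun n => ‖u n‖ ^ 2) hu
  refine Summable.of_nonneg_of_le (fun n => sq_nonneg _) (fun n => ?_)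
    (((hu.mul_left 12).add (hp.mul_left 3)).add (h1.mul_left 3))
  cases n with
  | zero =>
      rw [lap_zero]
      have h := norm_sub_le (u 0) (u 1)
      simp only [Nat.zero_sub, Nat.zero_add]
      nlinarith [norm_nonneg (u 0), norm_nonneg (u 1), norm_nonneg (u 0 - u 1),
        sq_nonneg (‖u 0‖ - ‖u 1‖)]
  | succ n =>
      rw [lap_succ]
      have h : ‖2 * u (n + 1) - u n - u (n + 2)‖ ≤ 2 * ‖u (n + 1)‖ + ‖u n‖ + ‖u (n + 2)‖ := by
        calc ‖2 * u (n + 1) - u n - u (n + 2)‖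
            ≤ ‖2 * u (n + 1) - u n‖ + ‖u (n + 2)‖ := norm_sub_le _ _
          _ ≤ ‖2 * u (n + 1)‖ + ‖u n‖ + ‖u (n + 2)‖ := by
              have := norm_sub_le (2 * u (n + 1)) (u n); linarith
          _ = 2 * ‖u (n + 1)‖ + ‖u n‖ + ‖u (n + 2)‖ := by
              rw [norm_mul]; norm_num
      have hs : (n + 1 : ℕ) - 1 = n := rfl
      have hs2 : n + 1 + 1 = n + 2 := rfl
      rw [hs, hs2]
      nlinarith [norm_nonneg (u n), norm_nonneg (u (n + 1)), norm_nonneg (u (n + 2)),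
        norm_nonneg (2 * u (n + 1) - u n - u (n + 2)), sq_nonneg (2*‖u (n+1)‖ - ‖u n‖),
        sq_nonneg (2*‖u (n+1)‖ - ‖u (n+2)‖), sq_nonneg (‖u n‖ - ‖u (n+2)‖)]

private lemma l2_tendsto_zero {u : ℕ → ℂ} (hu : Summable fun n => ‖u n‖ ^ 2) :
    Filter.Tendsto u Filter.atTop (nhds 0) := by
  rw [tendsto_zero_iff_norm_tendsto_zero]
  have h := hu.tendsto_atTop_zero
  have h2 : Filter.Tendsto (fun n => Real.sqrt (‖u n‖ ^ 2)) Filter.atTop (nhds (Real.sqrt 0)) :=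
    (Real.continuous_sqrt.tendsto 0).comp h
  simpa [Real.sqrt_sq (norm_nonneg _)] using h2

private lemma lap_symm {v w : ℕ → ℂ} (hv : Summable fun n => ‖v n‖ ^ 2)
    (hw : Summable fun n => ‖w n‖ ^ 2) :
    ∑' n, lapHalfLine v n * (starRingEnd ℂ) (w n)
      = ∑' n, v n * (starRingEnd ℂ) (lapHalfLine w n) := by
  have ha := summable_mul_conj (lap_l2 hv) hw
  have hb := summable_mul_conj hv (lap_l2 hw)
  set g : ℕ → ℂ :=
    fun n => lapHalfLine v n * (starRingEnd ℂ) (w n)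
      - v n * (starRingEnd ℂ) (lapHalfLine w n) with hg
  have hgs : Summable g := ha.sub hb
  set F : ℕ → ℂ :=
    fun n => v (n + 1) * (starRingEnd ℂ) (w n) - v n * (starRingEnd ℂ) (w (n + 1)) with hF
  have key : ∀ N, ∑ i ∈ Finset.range (N + 1), g i = -F N := by
    intro N
    induction N with
    | zero =>
        rw [Finset.sum_range_one]
        simp only [hg, hF, lap_zero, map_sub]
        ring
    | succ N ih =>
        rw [Finset.sum_range_succ, ih]
        have hg1 : g (N + 1) = F N - F (N + 1) := by
          simp only [hg, hF, lap_succ, map_sub, map_mul, map_ofNat]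
          ring
        rw [hg1]; ring
  have hv0 := l2_tendsto_zero hv
  have hw0 := l2_tendsto_zero hw
  have hwc : Filter.Tendsto (fun n => (starRingEnd ℂ) (w n)) Filter.atTop (nhds 0) := by
    have := ((Complex.continuous_conj.tendsto 0).comp hw0)
    simpa [Function.comp_def] using this
  have hwc1 : Filter.Tendsto (fun n => (starRingEnd ℂ) (w (n + 1))) Filter.atTop (nhds 0) :=
    hwc.comp (Filter.tendsto_add_atTop_nat 1)
  have hv1 : Filter.Tendsto (fun n => v (n + 1)) Filter.atTop (nhds 0) :=
    hv0.comp (Filter.tendsto_add_atTop_nat 1)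
  have hF0 : Filter.Tendsto F Filter.atTop (nhds 0) := by
    have := (hv1.mul hwc).sub (hv0.mul hwc1)
    simpa [hF] using this
  have h1 : Filter.Tendsto (fun N => ∑ i ∈ Finset.range (N + 1), g i)
      Filter.atTop (nhds (∑' n, g n)) :=
    hgs.hasSum.tendsto_sum_nat.comp (Filter.tendsto_add_atTop_nat 1)
  have h2 : Filter.Tendsto (fun N => -F N) Filter.atTop (nhds 0) := by
    simpa using hF0.neg
  have hz : ∑' n, g n = 0 := by
    refine tendsto_nhds_unique ?_ h2
    simpa [key] using h1
  rw [hg] at hz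
  rw [Summable.tsum_sub ha hb] at hz
  exact sub_eq_zero.mp hz

private lemma conj_self_sum (f : ℕ → ℂ) :
    (starRingEnd ℂ) (∑' n, f n * (starRingEnd ℂ) (f n)) = ∑' n, f n * (starRingEnd ℂ) (f n) := by
  simp only [starRingEnd_apply]
  rw [tsum_star]
  exact tsum_congr fun n => by rw [star_mul, star_star]

/-- For the half-line graph with `b(k,k+1)=1`, `μ ≡ 1`, the operator
`Δ²u + Wu` with `W(k) = −k` is essentially self-adjoint on the finitely supported
functions in `ℓ²(ℕ)`.

Essential self-adjointness is formalized via the deficiency-index criterion: for every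
`ν ≠ 0`, the only `u ∈ ℓ²` with `Δ²u + Wu ∈ ℓ²` and `Δ²u + Wu = iνu` is `u = 0`. -/
theorem halfLine_biLaplacian_essentially_selfAdjoint :
    ∀ ν : ℝ, ν ≠ 0 → ∀ u : ℕ → ℂ,
      (Summable fun n => ‖u n‖ ^ 2) →
      (Summable fun n => ‖lapHalfLine (lapHalfLine u) n - (n : ℂ) * u n‖ ^ 2) →
      (∀ n, lapHalfLine (lapHalfLine u) n - (n : ℂ) * u n = (ν : ℂ) * Complex.I * u n) →
      u = 0 := by
  intro ν hν u hu _ heq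
  have hL : Summable fun n => ‖lapHalfLine u n‖ ^ 2 := lap_l2 hu
  have hL2 : Summable fun n => ‖lapHalfLine (lapHalfLine u) n‖ ^ 2 := lap_l2 hL
  have hA : Summable fun n => lapHalfLine (lapHalfLine u) n * (starRingEnd ℂ) (u n) :=
    summable_mul_conj hL2 hu
  have hC : Summable fun n => u n * (starRingEnd ℂ) (u n) := summable_mul_conj hu hu
  have hB : Summable fun n : ℕ => (n : ℂ) * u n * (starRingEnd ℂ) (u n) := by
    refine (hA.sub (hC.mul_left ((ν : ℂ) * Complex.I))).congr fun n => ?_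
    linear_combination (starRingEnd ℂ) (u n) * heq n
  set tA := ∑' n, lapHalfLine (lapHalfLine u) n * (starRingEnd ℂ) (u n) with htA
  set tB := ∑' n : ℕ, (n : ℂ) * u n * (starRingEnd ℂ) (u n) with htB
  set tC := ∑' n, u n * (starRingEnd ℂ) (u n) with htC
  have hsum : tA - tB = (ν : ℂ) * Complex.I * tC := by
    rw [htA, htB, htC, ← Summable.tsum_sub hA hB, ← tsum_mul_left]
    exact tsum_congr fun n => by linear_combination (starRingEnd ℂ) (u n) * heq n
  have hcA : (starRingEnd ℂ) tA = tA := by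
    rw [htA, lap_symm hL hu]
    exact conj_self_sum _
  have hcB : (starRingEnd ℂ) tB = tB := by
    rw [htB]
    simp only [starRingEnd_apply]
    rw [tsum_star]
    refine tsum_congr fun n => ?_
    rw [star_mul, star_mul, star_star]
    simp [Complex.star_def]
    ring
  have hcC : (starRingEnd ℂ) tC = tC := conj_self_sum u
  have hconj : tA - tB = -((ν : ℂ) * Complex.I * tC) := by
    have := congrArg (starRingEnd ℂ) hsum
    rw [map_sub, hcA, hcB, map_mul, map_mul, hcC] at this
    simpa [Complex.conj_I, Complex.conj_ofReal] using this
  have htC0 : tC = 0 := by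
    have h2 : (2 : ℂ) * ((ν : ℂ) * Complex.I) * tC = 0 := by
      have := hsum.symm.trans hconj
      linear_combination this
    have hne : (2 : ℂ) * ((ν : ℂ) * Complex.I) ≠ 0 := by
      simp [Complex.ext_iff, hν]
    exact (mul_eq_zero.mp h2).resolve_left hne
  have hhs : HasSum (fun n => (u n * (starRingEnd ℂ) (u n)).re) 0 := by
    have := Complex.hasSum_re (hC.hasSum)
    rw [← htC, htC0] at this
    simpa using this
  funext n
  have hle : (u n * (starRingEnd ℂ) (u n)).re ≤ 0 := by
    refine le_hasSum hhs n fun j _ => ?_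
    rw [Complex.mul_conj]
    simpa using Complex.normSq_nonneg (u j)
  have : Complex.normSq (u n) = 0 := by
    have h1 : (u n * (starRingEnd ℂ) (u n)).re = Complex.normSq (u n) := by
      rw [Complex.mul_conj]; simp
    have := Complex.normSq_nonneg (u n)
    linarith [hle, h1 ▸ hle]
  simpa using Complex.normSq_eq_zero.mp this
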